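/- Let G be a group and let U, V, W be finite subsets of G. Then the sum over all pairs (g,h) with g ∈ U·V and h ∈ V·W of the cardinality |U⁻¹g ∩ V ∩ hW⁻¹| equals |U|·|V|·|W|. (Equivalently, the map (u,v,w) ↦ (uv, vw, v) is a bijection from U×V×W onto the set of triples (g,h,z) with z ∈ U⁻¹g ∩ V ∩ hW⁻¹.) -/

import Mathlib

open Finset Pointwise

theorem stmt6 {G : Type*} [Group G] [DecidableEq G] (U V W : Finset G) :
    ∑ g ∈ U * V, ∑ h ∈ V * W, ((U⁻¹ * {g}) ∩ V ∩ ({h} * W⁻¹)).card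
      = U.card * V.card * W.card := by
  have h1 : ∑ g ∈ U * V, ∑ h ∈ V * W, ((U⁻¹ * {g}) ∩ V ∩ ({h} * W⁻¹)).card
      = ((U * V).sigma fun g => (V * W).sigma fun h =>
          ((U⁻¹ * {g}) ∩ V ∩ ({h} * W⁻¹))).card := by
    rw [card_sigma]
    exact Finset.sum_congr rfl fun g _ => (card_sigma _ _).symm
  rw [h1, ← card_product, ← card_product]
  refine Finset.card_nbij' (i := fun q => ((q.1 * q.2.2⁻¹, q.2.2), q.2.2⁻¹ * q.2.1))
    (j := fun p => ⟨p.1.1 * p.1.2, p.1.2 * p.2, p.1.2⟩) ?_ ?_ ?_ ?_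
  · rintro ⟨g, h, z⟩ hq
    simp only [mem_coe, mem_sigma, mem_inter, mem_mul, mem_inv, mem_singleton] at hq
    obtain ⟨hg, hh, ⟨⟨a, ha, b, hb, hab⟩, hz⟩, c, hc, d, hd, hcd⟩ := hq
    simp only [mem_coe, mem_product]
    obtain ⟨a', ha', rfl⟩ := ha
    obtain ⟨d', hd', rfl⟩ := hd
    subst hb hc
    refine ⟨⟨?_, hz⟩, ?_⟩
    · have : b * z⁻¹ = a' := by rw [← hab]; group
      rwa [this]
    · have : z⁻¹ * c = d' := by rw [← hcd]; group
      rwa [this]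
  · rintro ⟨⟨u, v⟩, w⟩ hp
    simp only [mem_coe, mem_product] at hp
    obtain ⟨⟨hu, hv⟩, hw⟩ := hp
    simp only [mem_coe, mem_sigma]
    refine ⟨mul_mem_mul hu hv, mul_mem_mul hv hw, ?_⟩
    simp only [mem_inter, mem_mul, mem_inv, mem_singleton]
    exact ⟨⟨⟨u⁻¹, by simpa using hu, u*v, rfl, by group⟩, hv⟩,
      v*w, rfl, w⁻¹, by simpa using hw, by group⟩
  · rintro ⟨g, h, z⟩ hq; simp
  · rintro ⟨⟨u, v⟩, w⟩ hp; simp
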